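/- Let Ω ⊆ ℝ² be a bounded open set whose frontier ∂Ω does not contain the origin, let r > 0, and let T be the inversion in the sphere of radius r centered at the origin. Let σ be the 1-dimensional Hausdorff measure restricted to ∂Ω, σ* the 1-dimensional Hausdorff measure restricted to ∂Ω* := T(∂Ω), φ : ℝ² → ℝ bounded and Borel measurable with σ(∂Ω) < ∞, and define φ* on ∂Ω* by φ*(T y) := φ(y)|y|²/r². Then for every x ∈ ℝ² with x ≠ 0 such that y ↦ Γ(x − y)φ(y) and y ↦ Γ(y)φ(y) are σ-integrable, ∫_{∂Ω*} Γ(Tx − z) φ*(z) dσ*(z) = ∫_{∂Ω} Γ(x − y) φ(y) dσ(y) − ∫_{∂Ω} Γ(y) φ(y) dσ(y) + (∫_{∂Ω} φ dσ) ((1/(2π)) log(r²) − Γ(x)), where Γ(z) = (1/(2π)) log|z|. -/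

import Mathlib

open MeasureTheory
open scoped Real ENNReal NNReal


variable {E : Type*} [NormedAddCommGroup E] [InnerProductSpace ℝ E]

theorem inv_dist (r : ℝ) (x y : E) (hx : x ≠ 0) (hy : y ≠ 0) :
    ‖(r ^ 2 / ‖x‖ ^ 2) • x - (r ^ 2 / ‖y‖ ^ 2) • y‖ = r ^ 2 * ‖x - y‖ / (‖x‖ * ‖y‖) := by
  have hx' : (0:ℝ) < ‖x‖ := norm_pos_iff.2 hx
  have hy' : (0:ℝ) < ‖y‖ := norm_pos_iff.2 hy
  have h0 : ‖x - y‖ ^ 2 = ‖x‖ ^ 2 - 2 * (inner ℝ x y : ℝ) + ‖y‖ ^ 2 := norm_sub_sq_real x y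
  have h1 : ‖(r ^ 2 / ‖x‖ ^ 2) • x - (r ^ 2 / ‖y‖ ^ 2) • y‖ ^ 2
      = (r ^ 2 * ‖x - y‖ / (‖x‖ * ‖y‖)) ^ 2 := by
    rw [norm_sub_sq_real]
    simp only [real_inner_smul_left, real_inner_smul_right, norm_smul, Real.norm_eq_abs,
      mul_pow, sq_abs]
    rw [div_pow (r^2*‖x-y‖), mul_pow, mul_pow, h0]
    field_simp
    ring
  have h2 : (0:ℝ) ≤ r ^ 2 * ‖x - y‖ / (‖x‖ * ‖y‖) := by positivity
  nlinarith [norm_nonneg ((r ^ 2 / ‖x‖ ^ 2) • x - (r ^ 2 / ‖y‖ ^ 2) • y)]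

noncomputable def Imap (r : ℝ) (y : E) : E := (r ^ 2 / ‖y‖ ^ 2) • y

theorem Imap_norm {r : ℝ} (hr : 0 < r) {y : E} (hy : y ≠ 0) : ‖Imap r y‖ = r ^ 2 / ‖y‖ := by
  have hy' : (0:ℝ) < ‖y‖ := norm_pos_iff.2 hy
  rw [Imap, norm_smul, Real.norm_eq_abs, abs_of_pos (by positivity)]
  field_simp

theorem Imap_ne_zero {r : ℝ} (hr : 0 < r) {y : E} (hy : y ≠ 0) : Imap r y ≠ 0 := by
  have := Imap_norm hr hy
  have hy' : (0:ℝ) < ‖y‖ := norm_pos_iff.2 hy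
  intro h
  rw [h, norm_zero] at this
  have : (0:ℝ) < r ^ 2 / ‖y‖ := by positivity
  simp_all

theorem Imap_invol {r : ℝ} (hr : 0 < r) {y : E} (hy : y ≠ 0) : Imap r (Imap r y) = y := by
  have hy' : (0:ℝ) < ‖y‖ := norm_pos_iff.2 hy
  rw [Imap, Imap_norm hr hy, Imap, smul_smul]
  rw [show r ^ 2 / (r ^ 2 / ‖y‖) ^ 2 * (r ^ 2 / ‖y‖ ^ 2) = 1 by field_simp, one_smul]

theorem Imap_dist {r : ℝ} (x y : E) (hx : x ≠ 0) (hy : y ≠ 0) :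
    ‖Imap r x - Imap r y‖ = r ^ 2 * ‖x - y‖ / (‖x‖ * ‖y‖) := inv_dist r x y hx hy

theorem Imap_lipschitzOn {r a : ℝ} (hr : 0 < r) (ha : 0 < a) {s : Set E}
    (hs : ∀ y ∈ s, a ≤ ‖y‖) : LipschitzOnWith (r ^ 2 / a ^ 2).toNNReal (Imap r) s := by
  apply LipschitzOnWith.of_dist_le_mul
  intro y hy z hz
  have hya := hs y hy; have hza := hs z hz
  have hy0 : y ≠ 0 := by intro h; rw [h, norm_zero] at hya; linarith
  have hz0 : z ≠ 0 := by intro h; rw [h, norm_zero] at hza; linarith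
  rw [dist_eq_norm, dist_eq_norm, Imap_dist y z hy0 hz0]
  rw [Real.coe_toNNReal _ (by positivity)]
  have h1 : a * a ≤ ‖y‖ * ‖z‖ :=
    mul_le_mul hya hza (le_of_lt ha) (le_trans (le_of_lt ha) hya)
  calc r ^ 2 * ‖y - z‖ / (‖y‖ * ‖z‖) ≤ r ^ 2 * ‖y - z‖ / (a * a) := by
        gcongr
    _ = r ^ 2 / a ^ 2 * ‖y - z‖ := by rw [sq a]; ring

local notation "E2" => EuclideanSpace ℝ (Fin 2)

theorem Imap_image_le {r a : ℝ} (hr : 0 < r) (ha : 0 < a) {s : Set E2}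
    (hs : ∀ y ∈ s, a ≤ ‖y‖) :
    μH[1] (Imap r '' s) ≤ ENNReal.ofReal (r ^ 2 / a ^ 2) * μH[1] s := by
  have h := (Imap_lipschitzOn hr ha hs).hausdorffMeasure_image_le zero_le_one
  simpa [ENNReal.rpow_one, ENNReal.ofReal] using h


theorem Imap_image_ge {r a b : ℝ} (hr : 0 < r) (ha : 0 < a) (hab : a ≤ b) {s : Set E2}
    (hs : ∀ y ∈ s, a ≤ ‖y‖ ∧ ‖y‖ ≤ b) :
    ENNReal.ofReal (r ^ 2 / b ^ 2) * μH[1] s ≤ μH[1] (Imap r '' s) := by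
  have hb : (0:ℝ) < b := lt_of_lt_of_le ha hab
  have hne : ∀ y ∈ s, y ≠ 0 := by
    intro y hy h
    have := (hs y hy).1; rw [h, norm_zero] at this; linarith
  have hs' : ∀ z ∈ Imap r '' s, r ^ 2 / b ≤ ‖z‖ := by
    rintro z ⟨y, hy, rfl⟩
    rw [Imap_norm hr (hne y hy)]
    exact div_le_div_of_nonneg_left (by positivity) (norm_pos_iff.2 (hne y hy)) (hs y hy).2
  have key := Imap_image_le hr (show (0:ℝ) < r ^ 2 / b by positivity) hs'
  have hinv : Imap r '' (Imap r '' s) = s := by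
    rw [Set.image_image]
    have : Set.EqOn (fun y => Imap r (Imap r y)) id s := fun y hy => Imap_invol hr (hne y hy)
    rw [Set.image_congr this, Set.image_id]
  rw [hinv] at key
  have e1 : r ^ 2 / (r ^ 2 / b) ^ 2 = b ^ 2 / r ^ 2 := by field_simp
  rw [e1] at key
  calc ENNReal.ofReal (r ^ 2 / b ^ 2) * μH[1] s
      ≤ ENNReal.ofReal (r ^ 2 / b ^ 2) * (ENNReal.ofReal (b ^ 2 / r ^ 2) * μH[1] (Imap r '' s)) :=
        mul_le_mul_right key _
    _ = ENNReal.ofReal (r ^ 2 / b ^ 2 * (b ^ 2 / r ^ 2)) * μH[1] (Imap r '' s) := by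
        rw [ENNReal.ofReal_mul (by positivity), mul_assoc]
    _ = μH[1] (Imap r '' s) := by
        rw [show r ^ 2 / b ^ 2 * (b ^ 2 / r ^ 2) = 1 by field_simp, ENNReal.ofReal_one, one_mul]

theorem Imap_measurable (r : ℝ) : Measurable (Imap (E := E2) r) := by
  unfold Imap
  fun_prop

theorem Imap_continuousOn (r : ℝ) : ContinuousOn (Imap (E := E2) r) {y : E2 | y ≠ 0} := by
  refine ContinuousOn.smul (f := fun y : E2 => r ^ 2 / ‖y‖ ^ 2) (g := id) ?_ ?_
  · exact continuousOn_const.div (by fun_prop) (fun y hy => by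
      simpa using norm_pos_iff.2 hy |>.ne')
  · exact continuousOn_id

theorem Imap_injOn {r : ℝ} (hr : 0 < r) {s : Set E2} (h0 : ∀ y ∈ s, y ≠ 0) :
    Set.InjOn (Imap r) s := fun y hy z hz h => by
  rw [← Imap_invol hr (h0 y hy), h, Imap_invol hr (h0 z hz)]

theorem Imap_image_measurable {r : ℝ} (hr : 0 < r) {s : Set E2} (hs : MeasurableSet s)
    (h0 : ∀ y ∈ s, y ≠ 0) : MeasurableSet (Imap r '' s) :=
  hs.image_of_continuousOn_injOn ((Imap_continuousOn r).mono h0) (Imap_injOn hr h0)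

theorem Imap_measure_image {r a : ℝ} (hr : 0 < r) (ha : 0 < a) {S : Set E2}
    (hS : MeasurableSet S) (hSa : ∀ y ∈ S, a ≤ ‖y‖) :
    μH[1] (Imap r '' S) = ∫⁻ y in S, ENNReal.ofReal (r ^ 2 / ‖y‖ ^ 2) ∂μH[1] := by
  set μ : Measure E2 := μH[1] with hμ
  set F := ∫⁻ y in S, ENNReal.ofReal (r ^ 2 / ‖y‖ ^ 2) ∂μ with hF
  have hρmeas : Measurable (fun y : E2 => ENNReal.ofReal (r ^ 2 / ‖y‖ ^ 2)) := by fun_prop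
  have hS0 : ∀ y ∈ S, y ≠ 0 := by
    intro y hy h
    have := hSa y hy; rw [h, norm_zero] at this; linarith
  -- main two-sided estimate for each q > 1
  have key : ∀ q : ℝ, 1 < q →
      μH[1] (Imap r '' S) ≤ ENNReal.ofReal (q ^ 2) * F ∧
      F ≤ ENNReal.ofReal (q ^ 2) * μH[1] (Imap r '' S) := by
    intro q hq
    have hq0 : (0:ℝ) < q := lt_trans zero_lt_one hq
    set A : ℕ → Set E2 := fun j => S ∩ {y | a * q ^ j ≤ ‖y‖ ∧ ‖y‖ < a * q ^ (j + 1)} with hA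
    have hAmeas : ∀ j, MeasurableSet (A j) := by
      intro j
      rw [hA]
      simp only [Set.setOf_and]
      exact hS.inter ((measurableSet_le measurable_const measurable_norm).inter
        (measurableSet_lt measurable_norm measurable_const))
    have hA0 : ∀ j, ∀ y ∈ A j, y ≠ 0 := fun j y hy => hS0 y hy.1
    have hAlow : ∀ j, ∀ y ∈ A j, a * q ^ j ≤ ‖y‖ := fun j y hy => hy.2.1
    have hAhigh : ∀ j, ∀ y ∈ A j, ‖y‖ ≤ a * q ^ (j + 1) := fun j y hy => le_of_lt hy.2.2
    have hcover : S = ⋃ j, A j := by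
      apply Set.Subset.antisymm
      · intro y hy
        have h1 : 1 ≤ ‖y‖ / a := (one_le_div ha).2 (hSa y hy)
        obtain ⟨n, hn1, hn2⟩ := exists_nat_pow_near h1 hq
        refine Set.mem_iUnion.2 ⟨n, hy, ?_, ?_⟩
        · rw [mul_comm, ← le_div_iff₀ ha]; exact hn1
        · rw [mul_comm, ← div_lt_iff₀ ha]; exact hn2
      · exact Set.iUnion_subset fun j => Set.inter_subset_left
    have hdisj0 : ∀ i j : ℕ, i < j → Disjoint (A i) (A j) := by
      intro i j hlt
      rw [Set.disjoint_left]
      rintro y ⟨_, hyi1, hyi2⟩ ⟨_, hyj1, _⟩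
      have : a * q ^ (i + 1) ≤ a * q ^ j :=
        mul_le_mul_of_nonneg_left (pow_le_pow_right₀ (le_of_lt hq) (by omega)) (le_of_lt ha)
      linarith
    have hdisj : Pairwise (Function.onFun Disjoint A) := by
      intro i j hij
      rcases hij.lt_or_gt with h | h
      · exact hdisj0 i j h
      · exact (hdisj0 j i h).symm
    have hidisj : Pairwise (Function.onFun Disjoint (fun j => Imap r '' A j)) := by
      intro i j hij
      rw [Function.onFun, Set.disjoint_iff_inter_eq_empty]
      have hinj : Set.InjOn (Imap r) {y : E2 | y ≠ 0} := Imap_injOn hr (fun y hy => hy)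
      rw [← hinj.image_inter (hA0 i) (hA0 j)]
      rw [Set.disjoint_iff_inter_eq_empty.1 (hdisj hij), Set.image_empty]
    have himeas : ∀ j, MeasurableSet (Imap r '' A j) := fun j =>
      Imap_image_measurable hr (hAmeas j) (hA0 j)
    -- per-piece estimates
    have haj : ∀ j : ℕ, (0:ℝ) < a * q ^ j := fun j => by positivity
    have hup : ∀ j, μ (Imap r '' A j) ≤
        ENNReal.ofReal (q ^ 2) * ∫⁻ y in A j, ENNReal.ofReal (r ^ 2 / ‖y‖ ^ 2) ∂μ := by
      intro j
      have h1 := Imap_image_le hr (haj j) (hAlow j)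
      have e1 : r ^ 2 / (a * q ^ j) ^ 2 = q ^ 2 * (r ^ 2 / (a * q ^ (j + 1)) ^ 2) := by
        field_simp; ring
      have h2 : ENNReal.ofReal (r ^ 2 / (a * q ^ (j+1)) ^ 2) * μ (A j)
          ≤ ∫⁻ y in A j, ENNReal.ofReal (r ^ 2 / ‖y‖ ^ 2) ∂μ := by
        rw [← setLIntegral_const]
        refine setLIntegral_mono hρmeas ?_
        intro y hy
        apply ENNReal.ofReal_le_ofReal
        have h3 : (0:ℝ) < ‖y‖ := lt_of_lt_of_le (haj j) (hAlow j y hy)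
        exact div_le_div_of_nonneg_left (by positivity) (by positivity) (by
          have h4 := hAhigh j y hy; nlinarith [sq_nonneg (a * q ^ (j+1) - ‖y‖), sq_nonneg ‖y‖])
      calc μ (Imap r '' A j) ≤ ENNReal.ofReal (r ^ 2 / (a * q ^ j) ^ 2) * μ (A j) := h1
        _ = ENNReal.ofReal (q ^ 2) * (ENNReal.ofReal (r ^ 2 / (a * q ^ (j+1)) ^ 2) * μ (A j)) := by
            rw [e1, ENNReal.ofReal_mul (by positivity), mul_assoc]
        _ ≤ _ := mul_le_mul_right h2 _
    have hlow : ∀ j, (∫⁻ y in A j, ENNReal.ofReal (r ^ 2 / ‖y‖ ^ 2) ∂μ) ≤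
        ENNReal.ofReal (q ^ 2) * μ (Imap r '' A j) := by
      intro j
      have h1 := Imap_image_ge hr (haj j) (le_of_lt (by
        have : (1:ℝ) < q := hq
        calc a * q ^ j < a * q ^ (j+1) := by
              have : q ^ j < q ^ (j+1) := pow_lt_pow_right₀ hq (by omega)
              nlinarith
          )) (fun y hy => ⟨hAlow j y hy, hAhigh j y hy⟩)
      have e1 : r ^ 2 / (a * q ^ j) ^ 2 = q ^ 2 * (r ^ 2 / (a * q ^ (j + 1)) ^ 2) := by
        field_simp; ring
      have h2 : (∫⁻ y in A j, ENNReal.ofReal (r ^ 2 / ‖y‖ ^ 2) ∂μ)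
          ≤ ENNReal.ofReal (r ^ 2 / (a * q ^ j) ^ 2) * μ (A j) := by
        rw [← setLIntegral_const]
        refine setLIntegral_mono (by fun_prop) ?_
        intro y hy
        apply ENNReal.ofReal_le_ofReal
        have h3 : (0:ℝ) < ‖y‖ := lt_of_lt_of_le (haj j) (hAlow j y hy)
        exact div_le_div_of_nonneg_left (by positivity) (by positivity) (by
          have h4 := hAlow j y hy; have h5 := haj j
          nlinarith [sq_nonneg (‖y‖ - a * q ^ j)])
      calc (∫⁻ y in A j, ENNReal.ofReal (r ^ 2 / ‖y‖ ^ 2) ∂μ)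
          ≤ ENNReal.ofReal (r ^ 2 / (a * q ^ j) ^ 2) * μ (A j) := h2
        _ = ENNReal.ofReal (q ^ 2) * (ENNReal.ofReal (r ^ 2 / (a * q ^ (j+1)) ^ 2) * μ (A j)) := by
            rw [e1, ENNReal.ofReal_mul (by positivity), mul_assoc]
        _ ≤ _ := mul_le_mul_right (h1) _
    -- sum up
    have hsum1 : μH[1] (Imap r '' S) = ∑' j, μ (Imap r '' A j) := by
      rw [hcover, Set.image_iUnion]
      exact measure_iUnion hidisj himeas
    have hsum2 : F = ∑' j, ∫⁻ y in A j, ENNReal.ofReal (r ^ 2 / ‖y‖ ^ 2) ∂μ := by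
      rw [hF, hcover, lintegral_iUnion hAmeas hdisj]
    constructor
    · rw [hsum1, hsum2, ← ENNReal.tsum_mul_left]
      exact ENNReal.tsum_le_tsum hup
    · rw [hsum1, hsum2, ← ENNReal.tsum_mul_left]
      exact ENNReal.tsum_le_tsum hlow
  -- pass to the limit q → 1
  have htend : ∀ C : ℝ≥0∞, Filter.Tendsto
      (fun n : ℕ => ENNReal.ofReal ((1 + 1 / (n + 1 : ℝ)) ^ 2) * C) Filter.atTop (nhds C) := by
    intro C
    have h1 : Filter.Tendsto (fun n : ℕ => (1 + 1 / (n + 1 : ℝ)) ^ 2) Filter.atTop (nhds 1) := by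
      have h0 : Filter.Tendsto (fun n : ℕ => 1 / (n + 1 : ℝ)) Filter.atTop (nhds 0) :=
        tendsto_one_div_add_atTop_nhds_zero_nat
      have h1' : Filter.Tendsto (fun n : ℕ => ((1:ℝ) + 1 / (n + 1 : ℝ))) Filter.atTop
          (nhds ((1:ℝ) + 0)) := (tendsto_const_nhds (x := (1:ℝ))).add h0
      have := h1'.pow 2
      simpa using this
    have h2 : Filter.Tendsto (fun n : ℕ => ENNReal.ofReal ((1 + 1 / (n + 1 : ℝ)) ^ 2))
        Filter.atTop (nhds 1) := by
      have := (ENNReal.continuous_ofReal.tendsto 1).comp h1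
      simpa [Function.comp_def] using this
    have := ENNReal.Tendsto.mul_const (b := C) h2 (Or.inl one_ne_zero)
    simpa using this
  have hqn : ∀ n : ℕ, (1:ℝ) < 1 + 1 / (n + 1 : ℝ) := by
    intro n
    have : (0:ℝ) < 1 / (n + 1 : ℝ) := by positivity
    linarith
  apply le_antisymm
  · exact ge_of_tendsto' (htend F) (fun n => (key _ (hqn n)).1)
  · exact ge_of_tendsto' (htend (μH[1] (Imap r '' S))) (fun n => (key _ (hqn n)).2)

theorem gmeas_aux (r c : ℝ) (x : E2) (φ : E2 → ℝ) (hφmeas : Measurable φ) :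
    Measurable (fun z : E2 =>
      c * Real.log ‖Imap r x - z‖ * (φ (Imap r z) * ‖Imap r z‖ ^ 2 / r ^ 2)) := by
  apply Measurable.mul
  · apply Measurable.mul measurable_const
    exact Real.measurable_log.comp ((measurable_const.sub measurable_id).norm)
  · apply Measurable.div_const
    exact (hφmeas.comp (Imap_measurable r)).mul (((Imap_measurable r).norm).pow_const 2)

set_option maxHeartbeats 1000000 in
/-- Transformation of the single layer potential in `ℝ²` under inversion in a sphere
centered at the origin: with `Γ(z) = (1/(2π)) log|z|`, `φ*(Ty) = φ(y)|y|²/r²`,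
`S_{∂Ω*}[φ*](Tx) = S_{∂Ω}[φ](x) − S_{∂Ω}[φ](0) + (∫_{∂Ω} φ dσ)(Γ(r²) − Γ(x))`. -/
theorem single_layer_inversion_dim2
    (r : ℝ) (hr : 0 < r) (Ω : Set (EuclideanSpace ℝ (Fin 2)))
    (hopen : IsOpen Ω) (hbd : Bornology.IsBounded Ω)
    (h0 : (0 : EuclideanSpace ℝ (Fin 2)) ∉ frontier Ω)
    (T : EuclideanSpace ℝ (Fin 2) → EuclideanSpace ℝ (Fin 2))
    (hT : ∀ x : EuclideanSpace ℝ (Fin 2), x ≠ 0 → T x = (r ^ 2 / ‖x‖ ^ 2) • x)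
    (σ σs : Measure (EuclideanSpace ℝ (Fin 2)))
    (hσ : σ = μH[1].restrict (frontier Ω))
    (hσs : σs = μH[1].restrict (T '' frontier Ω))
    (hfin : σ (frontier Ω) < ⊤)
    (φ : EuclideanSpace ℝ (Fin 2) → ℝ) (hφmeas : Measurable φ)
    (hφbdd : ∃ C, ∀ y, |φ y| ≤ C)
    (φs : EuclideanSpace ℝ (Fin 2) → ℝ)
    (hφs : ∀ y ∈ frontier Ω, φs (T y) = φ y * ‖y‖ ^ 2 / r ^ 2)
    (x : EuclideanSpace ℝ (Fin 2)) (hx : x ≠ 0)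
    (hint1 : Integrable (fun y => (1 / (2 * π)) * Real.log ‖x - y‖ * φ y) σ)
    (hint2 : Integrable (fun y => (1 / (2 * π)) * Real.log ‖y‖ * φ y) σ) :
    ∫ z, (1 / (2 * π)) * Real.log ‖T x - z‖ * φs z ∂σs =
      (∫ y, (1 / (2 * π)) * Real.log ‖x - y‖ * φ y ∂σ)
        - (∫ y, (1 / (2 * π)) * Real.log ‖y‖ * φ y ∂σ)
        + (∫ y, φ y ∂σ) *
            ((1 / (2 * π)) * Real.log (r ^ 2) - (1 / (2 * π)) * Real.log ‖x‖) := by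
  set K := frontier Ω with hK
  set μ : Measure E2 := μH[1] with hμdef
  have hKclosed : IsClosed K := isClosed_frontier
  have hKmeas : MeasurableSet K := hKclosed.measurableSet
  have hK0 : ∀ y ∈ K, y ≠ 0 := fun y hy h => h0 (h ▸ hy)
  -- a positive lower bound on the norm on K
  obtain ⟨a, ha, hKa⟩ : ∃ a : ℝ, 0 < a ∧ ∀ y ∈ K, a ≤ ‖y‖ := by
    obtain ⟨ε, hε, hball⟩ := Metric.isOpen_iff.1 hKclosed.isOpen_compl 0 h0
    refine ⟨ε, hε, fun y hy => ?_⟩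
    by_contra h
    push_neg at h
    exact (hball (by simpa [Metric.mem_ball, dist_eq_norm] using h)) hy
  -- T agrees with Imap on K and at x
  have hTI : ∀ y ∈ K, T y = Imap r y := fun y hy => hT y (hK0 y hy)
  have hTx : T x = Imap r x := hT x hx
  have himg : T '' K = Imap r '' K := Set.image_congr hTI
  have himgmeas : MeasurableSet (Imap r '' K) := Imap_image_measurable hr hKmeas hK0
  -- densities
  set ρ : E2 → ℝ≥0 := fun y => Real.toNNReal (r ^ 2 / ‖y‖ ^ 2) with hρ
  have hρmeas : Measurable ρ := by fun_prop
  -- the measure identity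
  have hmeasure : σs = Measure.map (Imap r) ((μ.restrict K).withDensity (fun y => (ρ y : ℝ≥0∞))) := by
    rw [hσs, himg]
    refine Measure.ext fun s hs => ?_
    rw [Measure.restrict_apply hs, Measure.map_apply (Imap_measurable r) hs,
      withDensity_apply _ ((Imap_measurable r) hs), Measure.restrict_restrict ((Imap_measurable r) hs)]
    have hSmeas : MeasurableSet (Imap r ⁻¹' s ∩ K) := ((Imap_measurable r) hs).inter hKmeas
    have hSa : ∀ y ∈ Imap r ⁻¹' s ∩ K, a ≤ ‖y‖ := fun y hy => hKa y hy.2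
    have hcoe : ∀ y : E2, ((ρ y : ℝ≥0∞)) = ENNReal.ofReal (r ^ 2 / ‖y‖ ^ 2) := fun y => rfl
    rw [show (fun y : E2 => ((ρ y : ℝ≥0∞))) = fun y => ENNReal.ofReal (r ^ 2 / ‖y‖ ^ 2) from
      funext hcoe]
    rw [← Imap_measure_image hr ha hSmeas hSa]
    congr 1
    ext z
    constructor
    · rintro ⟨hzs, y, hyK, rfl⟩
      exact ⟨y, ⟨hzs, hyK⟩, rfl⟩
    · rintro ⟨y, ⟨hys, hyK⟩, rfl⟩
      exact ⟨hys, ⟨y, hyK, rfl⟩⟩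
  -- measurable representative of the integrand on the image side
  set c : ℝ := 1 / (2 * π) with hc
  set g : E2 → ℝ := fun z =>
    c * Real.log ‖Imap r x - z‖ * (φ (Imap r z) * ‖Imap r z‖ ^ 2 / r ^ 2) with hg
  have hgmeas : Measurable g := gmeas_aux r c x φ hφmeas
  have hae : (fun z => c * Real.log ‖T x - z‖ * φs z) =ᵐ[σs] g := by
    rw [hσs, himg]
    refine (ae_restrict_mem himgmeas).mono ?_
    rintro z ⟨y, hyK, rfl⟩
    have hy0 := hK0 y hyK
    simp only [hg]
    rw [Imap_invol hr hy0, hTx, ← hTI y hyK, hφs y hyK]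
  rw [integral_congr_ae hae, hmeasure,
    integral_map (Imap_measurable r).aemeasurable hgmeas.aestronglyMeasurable,
    integral_withDensity_eq_integral_smul hρmeas]
  -- the measure σ
  haveI : NullSingletonClass μ := Measure.noAtoms_hausdorff E2 one_pos
  have hσK : σ = μ.restrict K := hσ
  have hne : ∀ᵐ y ∂(μ.restrict K), y ≠ x := by
    rw [MeasureTheory.ae_iff]
    have he : {y : E2 | ¬ y ≠ x} = {x} := by ext z; simp
    rw [he]
    rw [Measure.restrict_apply (measurableSet_singleton x)]
    exact measure_mono_null Set.inter_subset_left (measure_singleton x)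
  have haeK : (fun y => ρ y • g (Imap r y)) =ᵐ[μ.restrict K]
      (fun y => c * Real.log ‖x - y‖ * φ y - c * Real.log ‖y‖ * φ y
        + (c * Real.log (r ^ 2) - c * Real.log ‖x‖) * φ y) := by
    refine ((hne.and (ae_restrict_mem hKmeas)).mono ?_)
    rintro y ⟨hyx, hyK⟩
    have hy0 := hK0 y hyK
    have hny : (0:ℝ) < ‖y‖ := norm_pos_iff.2 hy0
    have hnx : (0:ℝ) < ‖x‖ := norm_pos_iff.2 hx
    have hnxy : (0:ℝ) < ‖x - y‖ := norm_pos_iff.2 (sub_ne_zero_of_ne (Ne.symm hyx))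
    simp only [hg]
    rw [Imap_invol hr hy0, Imap_dist x y hx hy0]
    have hsmul : ρ y • (c * Real.log (r ^ 2 * ‖x - y‖ / (‖x‖ * ‖y‖)) * (φ y * ‖y‖ ^ 2 / r ^ 2))
        = (r ^ 2 / ‖y‖ ^ 2) * (c * Real.log (r ^ 2 * ‖x - y‖ / (‖x‖ * ‖y‖))
            * (φ y * ‖y‖ ^ 2 / r ^ 2)) := by
      rw [hρ]
      rw [NNReal.smul_def, Real.coe_toNNReal _ (by positivity), smul_eq_mul]
    rw [hsmul]
    rw [Real.log_div (by positivity) (by positivity), Real.log_mul (by positivity) (by positivity),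
      Real.log_mul (by positivity) (by positivity)]
    field_simp
    ring
  rw [integral_congr_ae haeK, hσK]
  -- integrability and splitting
  rw [hσK] at hint1 hint2 hfin
  haveI : IsFiniteMeasure (μ.restrict K) := by
    constructor
    rw [Measure.restrict_apply MeasurableSet.univ, Set.univ_inter]
    rw [Measure.restrict_apply hKmeas, Set.inter_self] at hfin
    exact hfin
  have hφint : Integrable φ (μ.restrict K) := by
    obtain ⟨C, hC⟩ := hφbdd
    exact (integrable_const C).mono' hφmeas.aestronglyMeasurable
      (Filter.Eventually.of_forall (fun y => by simpa [Real.norm_eq_abs] using hC y))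
  have h3 : Integrable (fun y => (c * Real.log (r ^ 2) - c * Real.log ‖x‖) * φ y)
      (μ.restrict K) := hφint.const_mul _
  have hsub : Integrable (fun y => c * Real.log ‖x - y‖ * φ y - c * Real.log ‖y‖ * φ y)
      (μ.restrict K) := hint1.sub hint2
  rw [integral_add hsub h3, integral_sub hint1 hint2, integral_const_mul]
  ring
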